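/- Let a_1, …, a_N : I → ℝ be twice differentiable functions on an interval I whose values are pairwise distinct at every t ∈ I, with a_k'(t) ≠ 0 for all k and t. Set c_0(t) = −Σ_{k=1}^N a_k'(t) and F(z,t) = −Σ_{k=1}^N a_k'(t)/(z − a_k(t)). Then F satisfies the Riccati equation ∂_t F(z,t) = −c_0(t) + zF(z,t) − F(z,t)² for every t ∈ I and every real z ∉ {a_1(t), …, a_N(t)} if and only if the poles satisfy the system a_k'' = a_k a_k' + 2 Σ_{m ≠ k} a_k' a_m'/(a_k − a_m) for all k = 1, …, N on I. -/

import Mathlib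

open Finset

/-- If a sum of simple fractions vanishes away from the (distinct) poles, all
coefficients vanish. -/
private lemma sum_div_vanish {N : ℕ} (A c : Fin N → ℝ)
    (hA : ∀ k m : Fin N, k ≠ m → A k ≠ A m)
    (h : ∀ z : ℝ, (∀ k, z ≠ A k) → ∑ k, c k / (z - A k) = 0) :
    ∀ k, c k = 0 := by
  set g : ℝ → ℝ := fun z => ∑ j, c j * ∏ m ∈ univ.erase j, (z - A m) with hg
  have hgcont : Continuous g := by
    apply continuous_finset_sum
    intro j _
    exact continuous_const.mul (continuous_finset_prod _ fun m _ =>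
      continuous_id.sub continuous_const)
  have hdense : Dense (Set.range A)ᶜ :=
    ((Set.finite_range A).countable).dense_compl ℝ
  have hzero : g = fun _ => 0 := by
    apply Continuous.ext_on hdense hgcont continuous_const
    intro z hz
    have hz' : ∀ k, z ≠ A k := by
      intro k hk
      exact hz ⟨k, hk.symm⟩
    have hne : ∀ k : Fin N, z - A k ≠ 0 := fun k => sub_ne_zero.2 (hz' k)
    have key : g z = (∏ m, (z - A m)) * ∑ k, c k / (z - A k) := by
      rw [Finset.mul_sum]
      refine Finset.sum_congr rfl fun j _ => ?_
      rw [← mul_div_assoc, eq_div_iff (hne j),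
        ← Finset.mul_prod_erase univ (fun m => z - A m) (mem_univ j)]
      ring
    simp only [key, h z hz', mul_zero]
  intro k
  have hk0 : g (A k) = 0 := by rw [hzero]
  have hk1 : g (A k) = c k * ∏ m ∈ univ.erase k, (A k - A m) := by
    rw [hg]
    apply Finset.sum_eq_single
    · intro j _ hj
      have hkj : k ∈ univ.erase j := Finset.mem_erase.2 ⟨fun h => hj h.symm, mem_univ k⟩
      rw [Finset.prod_eq_zero hkj (sub_self (A k)), mul_zero]
    · intro h; exact absurd (mem_univ k) h
  have hprod : ∏ m ∈ univ.erase k, (A k - A m) ≠ 0 := by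
    rw [Finset.prod_ne_zero_iff]
    intro m hm
    exact sub_ne_zero.2 (hA k m fun h => (Finset.mem_erase.1 hm).1 h.symm)
  have := hk1 ▸ hk0
  exact (mul_eq_zero.1 this).resolve_right hprod

/-- Core algebraic identity behind the Riccati equation for the rational
Stieltjes function. -/
private lemma riccati_algebra {N : ℕ} (A d dd : Fin N → ℝ) (z : ℝ)
    (hz : ∀ k, z ≠ A k) (hA : ∀ k m : Fin N, k ≠ m → A k ≠ A m) :
    (-∑ k, (dd k * (z - A k) - d k * -d k) / (z - A k) ^ 2)
      - (-(-∑ k, d k) + z * (-∑ k, d k / (z - A k)) - (-∑ k, d k / (z - A k)) ^ 2)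
      = -∑ k, (dd k - (A k * d k
          + 2 * ∑ m ∈ univ.erase k, d k * d m / (A k - A m))) / (z - A k) := by
  have hne : ∀ k : Fin N, z - A k ≠ 0 := fun k => sub_ne_zero.2 (hz k)
  -- split the derivative sum
  have e1 : ∑ k, (dd k * (z - A k) - d k * -d k) / (z - A k) ^ 2
      = (∑ k, dd k / (z - A k)) + ∑ k, d k ^ 2 / (z - A k) ^ 2 := by
    rw [← Finset.sum_add_distrib]
    refine Finset.sum_congr rfl fun k _ => ?_
    rw [div_add_div _ _ (hne k) (pow_ne_zero 2 (hne k)),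
      div_eq_div_iff (pow_ne_zero 2 (hne k)) (mul_ne_zero (hne k) (pow_ne_zero 2 (hne k)))]
    ring
  -- expand z * F
  have e2 : z * ∑ k, d k / (z - A k)
      = (∑ k, d k) + ∑ k, A k * d k / (z - A k) := by
    rw [Finset.mul_sum, ← Finset.sum_add_distrib]
    refine Finset.sum_congr rfl fun k _ => ?_
    rw [← mul_div_assoc, add_div' _ _ _ (hne k), div_eq_div_iff (hne k) (hne k)]
    ring
  -- expand F²
  have e3 : (∑ k, d k / (z - A k)) ^ 2
      = (∑ k, d k ^ 2 / (z - A k) ^ 2)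
        + 2 * ∑ k, (∑ m ∈ univ.erase k, d k * d m / (A k - A m)) / (z - A k) := by
    have expand : (∑ k, d k / (z - A k)) ^ 2
        = ∑ k, ∑ m, d k * d m / ((z - A k) * (z - A m)) := by
      rw [sq, Finset.sum_mul_sum]
      exact Finset.sum_congr rfl fun k _ => Finset.sum_congr rfl fun m _ =>
        div_mul_div_comm _ _ _ _
    rw [expand]
    have split : ∀ k ∈ (univ : Finset (Fin N)),
        ∑ m, d k * d m / ((z - A k) * (z - A m))
          = d k ^ 2 / (z - A k) ^ 2
            + ∑ m ∈ univ.erase k, d k * d m / ((z - A k) * (z - A m)) := by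
      intro k _
      rw [← Finset.add_sum_erase univ _ (mem_univ k)]
      congr 1
      rw [sq, sq]
    rw [Finset.sum_congr rfl split, Finset.sum_add_distrib]
    congr 1
    have per : ∀ k ∈ (univ : Finset (Fin N)), ∀ m ∈ univ.erase k,
        d k * d m / ((z - A k) * (z - A m))
          = d k * d m / (A k - A m) / (z - A k)
            + d m * d k / (A m - A k) / (z - A m) := by
      intro k _ m hm
      have hmk : m ≠ k := (Finset.mem_erase.1 hm).1
      have h1 : A k - A m ≠ 0 := sub_ne_zero.2 (hA k m hmk.symm)
      have h2 : A m - A k ≠ 0 := sub_ne_zero.2 (hA m k hmk)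
      rw [div_div, div_div,
        div_add_div _ _ (mul_ne_zero h1 (hne k)) (mul_ne_zero h2 (hne m)),
        div_eq_div_iff (mul_ne_zero (hne k) (hne m))
          (mul_ne_zero (mul_ne_zero h1 (hne k)) (mul_ne_zero h2 (hne m)))]
      ring
    calc ∑ k, ∑ m ∈ univ.erase k, d k * d m / ((z - A k) * (z - A m))
        = ∑ k, ∑ m ∈ univ.erase k, (d k * d m / (A k - A m) / (z - A k)
            + d m * d k / (A m - A k) / (z - A m)) :=
          Finset.sum_congr rfl fun k hk => Finset.sum_congr rfl fun m hm => per k hk m hm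
      _ = (∑ k, ∑ m ∈ univ.erase k, d k * d m / (A k - A m) / (z - A k))
          + ∑ k, ∑ m ∈ univ.erase k, d m * d k / (A m - A k) / (z - A m) := by
          rw [← Finset.sum_add_distrib]
          exact Finset.sum_congr rfl fun k _ => Finset.sum_add_distrib
      _ = 2 * ∑ k, (∑ m ∈ univ.erase k, d k * d m / (A k - A m)) / (z - A k) := by
          have swap : ∑ k, ∑ m ∈ univ.erase k, d m * d k / (A m - A k) / (z - A m)
              = ∑ m, ∑ k ∈ univ.erase m, d m * d k / (A m - A k) / (z - A m) := by
            apply Finset.sum_comm'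
            intro x y
            simp only [Finset.mem_erase, Finset.mem_univ, and_true, true_and]
            exact ne_comm
          rw [swap]
          have inner : ∀ k ∈ (univ : Finset (Fin N)),
              ∑ m ∈ univ.erase k, d k * d m / (A k - A m) / (z - A k)
                = (∑ m ∈ univ.erase k, d k * d m / (A k - A m)) / (z - A k) :=
            fun k _ => (Finset.sum_div _ _ _).symm
          rw [Finset.sum_congr rfl inner]
          ring
  -- split the RHS
  have e4 : ∑ k, (dd k - (A k * d k
        + 2 * ∑ m ∈ univ.erase k, d k * d m / (A k - A m))) / (z - A k)
      = (∑ k, dd k / (z - A k)) - ((∑ k, A k * d k / (z - A k))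
          + 2 * ∑ k, (∑ m ∈ univ.erase k, d k * d m / (A k - A m)) / (z - A k)) := by
    rw [Finset.mul_sum, ← Finset.sum_add_distrib, ← Finset.sum_sub_distrib]
    refine Finset.sum_congr rfl fun k _ => ?_
    simp only [sub_div, add_div, mul_div_assoc]
  rw [e1, mul_neg, e2, neg_sq, e3, e4]
  ring

open Finset in
/-- The rational Stieltjes function `F(z,t) = -∑ₖ aₖ'(t)/(z - aₖ(t))`
(with `c₀ = -∑ₖ aₖ'`) satisfies the Riccati equation `∂ₜF = -c₀ + zF - F²` away
from the poles iff the poles satisfy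
`aₖ'' = aₖ aₖ' + 2 ∑_{m≠k} aₖ'aₘ'/(aₖ - aₘ)`. -/
theorem rational_riccati_iff_pole_system
    (I : Set ℝ) (hIopen : IsOpen I) (hIconn : I.OrdConnected)
    (N : ℕ) (a : Fin N → ℝ → ℝ)
    (had : ∀ k, ∀ t ∈ I, DifferentiableAt ℝ (a k) t)
    (had2 : ∀ k, ∀ t ∈ I, DifferentiableAt ℝ (deriv (a k)) t)
    (hane : ∀ k, ∀ t ∈ I, deriv (a k) t ≠ 0)
    (hdist : ∀ t ∈ I, ∀ k m : Fin N, k ≠ m → a k t ≠ a m t) :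
    (∀ t ∈ I, ∀ z : ℝ, (∀ k, z ≠ a k t) →
      deriv (fun s => -∑ k, deriv (a k) s / (z - a k s)) t
        = -(-∑ k, deriv (a k) t)
            + z * (-∑ k, deriv (a k) t / (z - a k t))
            - (-∑ k, deriv (a k) t / (z - a k t)) ^ 2) ↔
    (∀ k, ∀ t ∈ I,
      deriv (deriv (a k)) t
        = a k t * deriv (a k) t
            + 2 * ∑ m ∈ Finset.univ.erase k,
                deriv (a k) t * deriv (a m) t / (a k t - a m t)) := by
  -- compute the time derivative of F
  have hderiv : ∀ t ∈ I, ∀ z : ℝ, (∀ k, z ≠ a k t) →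
      deriv (fun s => -∑ k, deriv (a k) s / (z - a k s)) t
        = -∑ k, (deriv (deriv (a k)) t * (z - a k t)
            - deriv (a k) t * -deriv (a k) t) / (z - a k t) ^ 2 := by
    intro t ht z hz
    have hdk : ∀ k : Fin N,
        DifferentiableAt ℝ (fun s => deriv (a k) s / (z - a k s)) t := fun k =>
      (had2 k t ht).div ((differentiableAt_const z).sub (had k t ht))
        (sub_ne_zero.2 (hz k))
    rw [deriv.fun_neg, deriv_fun_sum fun k _ => hdk k]
    refine congrArg Neg.neg (Finset.sum_congr rfl fun k _ => ?_)
    rw [deriv_fun_div (d := fun s => z - a k s) (had2 k t ht) ((differentiableAt_const z).sub (had k t ht))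
      (sub_ne_zero.2 (hz k)), deriv_const_sub]
  constructor
  · intro h k t ht
    have hv := sum_div_vanish (fun j => a j t)
      (fun j => deriv (deriv (a j)) t - (a j t * deriv (a j) t
        + 2 * ∑ m ∈ univ.erase j, deriv (a j) t * deriv (a m) t / (a j t - a m t)))
      (hdist t ht) ?_ k
    · exact sub_eq_zero.1 hv
    · intro z hz
      have key := riccati_algebra (fun j => a j t) (fun j => deriv (a j) t)
        (fun j => deriv (deriv (a j)) t) z hz (hdist t ht)
      have hr := h t ht z hz
      rw [hderiv t ht z hz] at hr
      beta_reduce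
      beta_reduce at key hr
      have : -∑ k, (deriv (deriv (a k)) t - (a k t * deriv (a k) t
          + 2 * ∑ m ∈ univ.erase k, deriv (a k) t * deriv (a m) t / (a k t - a m t)))
            / (z - a k t) = 0 := by
        rw [← key, hr]; ring
      linarith [this]
  · intro h t ht z hz
    rw [hderiv t ht z hz]
    have key := riccati_algebra (fun j => a j t) (fun j => deriv (a j) t)
      (fun j => deriv (deriv (a j)) t) z hz (hdist t ht)
    beta_reduce at key
    have hzero : ∑ k, (deriv (deriv (a k)) t - (a k t * deriv (a k) t
        + 2 * ∑ m ∈ univ.erase k, deriv (a k) t * deriv (a m) t / (a k t - a m t)))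
          / (z - a k t) = 0 := by
      apply Finset.sum_eq_zero
      intro k _
      rw [sub_eq_zero.2 (h k t ht), zero_div]
    rw [hzero] at key
    linarith [key]
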